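/- Let q be a power of an odd prime, let n > 3 be odd with gcd(n, q - 1) = 1, let δ ∈ F_{q^n}^* with δ ≠ 1 and δ^{q-1} = 1, and let r be a positive integer with r < n and gcd(r, n) = 1. Then the map S : F_{q^n} → F_{q^n} given by S(x) = x^q + δx^{q^{2r+1}} is scattered of index r + 1 over F_{q^n}; moreover, S is scattered of index t over F_{q^n} for every t ∈ {1, r + 1, 2r + 1}. -/

import Mathlib

/-- A map `S : L → L` on the field `L = F_{q^n}` is scattered of index `t` over
`F_{q^n}/F_q` if for all nonzero `y, z`, `S(y)/y^{q^t} = S(z)/z^{q^t}` implies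
`y/z ∈ F_q`.  Membership of `y/z` in the subfield `F_q` is expressed via its
characterization as the fixed field of the `q`-power Frobenius: `(y/z)^q = y/z`. -/
def IsScattered (q t : ℕ) {L : Type} [Field L] (S : L → L) : Prop :=
  ∀ y z : L, y ≠ 0 → z ≠ 0 → S y * z ^ q ^ t = S z * y ^ q ^ t → (y / z) ^ q = y / z

private lemma pow_pow_fix {L : Type} [Monoid L] (c : L) (Q k : ℕ)
    (h : c ^ Q ^ k = c) : ∀ a : ℕ, c ^ Q ^ (k * a) = c := by
  intro a
  induction a with
  | zero => simp
  | succ a ih =>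
    rw [show k * (a + 1) = k * a + k by ring, pow_add, pow_mul, ih, h]

/-- Let q be a power of an odd prime, n > 3 odd with
gcd(n, q - 1) = 1, δ ∈ F_{q^n}^* with δ ≠ 1 and δ^{q-1} = 1, and r a positive
integer with r < n and gcd(r, n) = 1.  Then S(x) = x^q + δx^{q^{2r+1}} is
scattered of index r + 1 over F_{q^n}; moreover, S is scattered of index t for
every t ∈ {1, r + 1, 2r + 1}. -/
theorem stmt15 (q n r : ℕ)
    (hq : ∃ p m : ℕ, p.Prime ∧ Odd p ∧ 0 < m ∧ q = p ^ m)
    (hn : 3 < n) (hodd : Odd n) (hgcdqn : Nat.gcd n (q - 1) = 1)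
    (hr : 0 < r) (hrn : r < n) (hgcdrn : Nat.gcd r n = 1)
    (L : Type) [Field L] [Fintype L] (hcard : Fintype.card L = q ^ n)
    (δ : L) (hδ0 : δ ≠ 0) (hδ1 : δ ≠ 1) (hδord : δ ^ (q - 1) = 1) :
    IsScattered q (r + 1) (fun x : L => x ^ q + δ * x ^ q ^ (2 * r + 1)) ∧
    ∀ t ∈ ({1, r + 1, 2 * r + 1} : Set ℕ),
      IsScattered q t (fun x : L => x ^ q + δ * x ^ q ^ (2 * r + 1)) := by
  obtain ⟨p, m, hp, hpodd, hm, hqpm⟩ := hq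
  haveI : Fact p.Prime := ⟨hp⟩
  have hq2 : 2 ≤ q := by
    calc 2 ≤ p := hp.two_le
    _ ≤ p ^ m := Nat.le_self_pow hm.ne' p
    _ = q := hqpm.symm
  have hn0 : 0 < n := by omega
  -- characteristic of L is p
  haveI hcharP : CharP L p := by
    have hchar := ringChar.charP L
    have hprime : (ringChar L).Prime := CharP.char_is_prime L (ringChar L)
    obtain ⟨k, -, hk⟩ := FiniteField.card L (ringChar L)
    have h2 : p ^ (m * n) = ringChar L ^ (k : ℕ) := by
      rw [pow_mul, ← hqpm, ← hcard, hk]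
    have hmn : m * n ≠ 0 := by positivity
    have hd : p ∣ ringChar L ^ (k : ℕ) := h2 ▸ dvd_pow_self p hmn
    have : p = ringChar L :=
      (Nat.prime_dvd_prime_iff_eq hp hprime).mp (hp.dvd_of_dvd_pow hd)
    exact this ▸ hchar
  -- basic power identities
  have hpow_n : ∀ x : L, x ^ q ^ n = x := fun x => by
    rw [← hcard]; exact FiniteField.pow_card x
  have hpow_nk : ∀ (x : L) (a : ℕ), x ^ q ^ (n * a) = x := fun x a =>
    pow_pow_fix x q n (hpow_n x) a
  have epow : ∀ (x : L) (a b : ℕ), (x ^ q ^ a) ^ q ^ b = x ^ q ^ (a + b) := by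
    intro x a b; rw [← pow_mul, ← pow_add]
  have epow1 : ∀ (x : L) (b : ℕ), (x ^ q) ^ q ^ b = x ^ q ^ (b + 1) := by
    intro x b; rw [← pow_mul, ← pow_succ']
  have frob_inj : ∀ x y : L, x ^ q = y ^ q → x = y := by
    intro x y h
    calc x = x ^ q ^ n := (hpow_n x).symm
    _ = (x ^ q) ^ q ^ (n - 1) := by rw [epow1, show n - 1 + 1 = n from by omega]
    _ = (y ^ q) ^ q ^ (n - 1) := by rw [h]
    _ = y ^ q ^ n := by rw [epow1, show n - 1 + 1 = n from by omega]
    _ = y := hpow_n y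
  -- δ lies in F_q
  have hδq : δ ^ q = δ := by
    have h1 : δ ^ q = δ ^ (q - 1) * δ := by
      rw [← pow_succ]; congr 1; omega
    rw [h1, hδord, one_mul]
  have hδqk : ∀ k : ℕ, δ ^ q ^ k = δ := by
    intro k
    induction k with
    | zero => simp
    | succ k ih => rw [pow_succ, pow_mul, ih, hδq]
  -- the norm of δ is not 1
  have hδn : δ ^ n ≠ 1 := by
    intro h
    have h1 : orderOf δ ∣ n := orderOf_dvd_of_pow_eq_one h
    have h2 : orderOf δ ∣ q - 1 := orderOf_dvd_of_pow_eq_one hδord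
    have h3 : orderOf δ ∣ 1 := hgcdqn ▸ Nat.dvd_gcd h1 h2
    exact hδ1 (orderOf_eq_one_iff.mp (Nat.dvd_one.mp h3))
  -- fixed points of q^k-Frobenius for gcd(k, n) = 1 lie in F_q
  have gcd_fix : ∀ (k : ℕ) (c : L), Nat.gcd k n = 1 → c ^ q ^ k = c → c ^ q = c := by
    intro k c hgcd hc
    have hn1 : 1 < n := by omega
    obtain ⟨a, -, ha⟩ := Nat.exists_mul_mod_eq_one_of_coprime hgcd hn1
    have hb : k * a = n * (k * a / n) + 1 := by
      conv_lhs => rw [← Nat.div_add_mod (k * a) n]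
      rw [ha]
    have h1 : c ^ q ^ (k * a) = c := pow_pow_fix c q k hc a
    rw [hb, pow_succ, pow_mul, hpow_nk c _] at h1
    exact h1
  -- dividing relation
  have hdiv : ∀ (y z : L), z ≠ 0 → ∀ a b : ℕ,
      y ^ a * z ^ b = z ^ a * y ^ b → (y / z) ^ a = (y / z) ^ b := by
    intro y z hz a b h
    rw [div_pow, div_pow, div_eq_div_iff (pow_ne_zero _ hz) (pow_ne_zero _ hz)]
    linear_combination h
  -- key conclusions from fixed-point relations
  have key2r : ∀ c : L, c ^ q ^ (2 * r + 1) = c ^ q → c ^ q = c := by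
    intro c hc
    have h1 : (c ^ q ^ (2 * r)) ^ q = c ^ q := by
      rw [← pow_mul, ← pow_succ]; exact hc
    have h2 : c ^ q ^ (2 * r) = c := frob_inj _ _ h1
    have hg : Nat.gcd (2 * r) n = 1 :=
      Nat.Coprime.mul (Nat.coprime_two_left.mpr hodd) hgcdrn
    exact gcd_fix (2 * r) c hg h2
  have keyr : ∀ c : L, c ^ q ^ (r + 1) = c ^ q → c ^ q = c := by
    intro c hc
    have h1 : (c ^ q ^ r) ^ q = c ^ q := by
      rw [← pow_mul, ← pow_succ]; exact hc
    have h2 : c ^ q ^ r = c := frob_inj _ _ h1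
    exact gcd_fix r c hgcdrn h2
  -- the key iteration for index r+1
  have hwkey : ∀ v : L, v = δ * v ^ q ^ r → v = 0 := by
    intro v hv
    have hiter : ∀ k : ℕ, v = δ ^ k * v ^ q ^ (r * k) := by
      intro k
      induction k with
      | zero => simp
      | succ k ih =>
        calc v = δ ^ k * v ^ q ^ (r * k) := ih
        _ = δ ^ k * (δ * v ^ q ^ r) ^ q ^ (r * k) := by rw [← hv]
        _ = δ ^ k * (δ ^ q ^ (r * k) * (v ^ q ^ r) ^ q ^ (r * k)) := by rw [mul_pow]
        _ = δ ^ k * (δ * v ^ q ^ (r + r * k)) := by rw [hδqk, epow]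
        _ = δ ^ (k + 1) * v ^ q ^ (r * (k + 1)) := by
            rw [show r + r * k = r * (k + 1) by ring, pow_succ]; ring
    have hn' := hiter n
    have hfix : v ^ q ^ (r * n) = v := by
      rw [show r * n = n * r by ring]; exact hpow_nk v r
    rw [hfix] at hn'
    by_contra hv0
    apply hδn
    have h1 : δ ^ n * v = 1 * v := by linear_combination -hn'
    exact mul_right_cancel₀ hv0 h1
  -- scattered of index r+1
  have Srp1 : IsScattered q (r + 1) (fun x : L => x ^ q + δ * x ^ q ^ (2 * r + 1)) := by
    intro y z hy hz h
    simp only at h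
    have hqr : q ^ r = p ^ (m * r) := by rw [hqpm, ← pow_mul]
    have e1 : (y ^ q * z ^ q ^ (r + 1)) ^ q ^ r = y ^ q ^ (r + 1) * z ^ q ^ (2 * r + 1) := by
      rw [mul_pow, epow1 y r, epow z (r + 1) r, show r + 1 + r = 2 * r + 1 by ring]
    have e2 : (z ^ q * y ^ q ^ (r + 1)) ^ q ^ r = z ^ q ^ (r + 1) * y ^ q ^ (2 * r + 1) := by
      rw [mul_pow, epow1 z r, epow y (r + 1) r, show r + 1 + r = 2 * r + 1 by ring]
    have hsub : (y ^ q * z ^ q ^ (r + 1) - z ^ q * y ^ q ^ (r + 1)) ^ q ^ r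
        = y ^ q ^ (r + 1) * z ^ q ^ (2 * r + 1) - z ^ q ^ (r + 1) * y ^ q ^ (2 * r + 1) := by
      rw [hqr, sub_pow_char_pow, ← hqr, e1, e2]
    have hw : (y ^ q * z ^ q ^ (r + 1) - z ^ q * y ^ q ^ (r + 1))
        = δ * (y ^ q * z ^ q ^ (r + 1) - z ^ q * y ^ q ^ (r + 1)) ^ q ^ r := by
      rw [hsub]; linear_combination h
    have hw0 := hwkey _ hw
    have h' : y ^ q * z ^ q ^ (r + 1) = z ^ q * y ^ q ^ (r + 1) := by
      linear_combination hw0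
    have hc : (y / z) ^ q = (y / z) ^ q ^ (r + 1) := hdiv y z hz q (q ^ (r + 1)) h'
    exact keyr _ hc.symm
  refine ⟨Srp1, ?_⟩
  intro t ht
  simp only [Set.mem_insert_iff, Set.mem_singleton_iff] at ht
  rcases ht with rfl | rfl | rfl
  · -- index 1
    intro y z hy hz h
    simp only [pow_one] at h
    have h' : y ^ q ^ (2 * r + 1) * z ^ q = z ^ q ^ (2 * r + 1) * y ^ q := by
      have hδh : δ * (y ^ q ^ (2 * r + 1) * z ^ q) = δ * (z ^ q ^ (2 * r + 1) * y ^ q) := by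
        linear_combination h
      exact mul_left_cancel₀ hδ0 hδh
    exact key2r _ (hdiv y z hz (q ^ (2 * r + 1)) q h')
  · exact Srp1
  · -- index 2r+1
    intro y z hy hz h
    simp only at h
    have h' : y ^ q * z ^ q ^ (2 * r + 1) = z ^ q * y ^ q ^ (2 * r + 1) := by
      linear_combination h
    exact key2r _ (hdiv y z hz q (q ^ (2 * r + 1)) h').symm
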